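/- Let λ₁ ≥ ⋯ ≥ λ_{3n} ≥ 0 (n ≥ 3) satisfy λ₁ ≤ λ_{3n−1} + λ_{3n}. Then the 3×3 Hermitian matrix with rows (2λ_{3n}, λ_{3n−1}−λ₁, λ_{3n−2}−λ₂), (λ_{3n−1}−λ₁, 2λ_{3n−3}, λ_{3n−4}−λ₃), (λ_{3n−2}−λ₂, λ_{3n−4}−λ₃, 2λ_{3n−5}) is positive semidefinite. -/

import Mathlib

theorem stmt14 (n : ℕ) (hn : 3 ≤ n) (lam : Fin (3 * n) → ℝ)
    (hsort : ∀ i j : Fin (3 * n), i ≤ j → lam j ≤ lam i) (hnonneg : ∀ i, 0 ≤ lam i)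
    (h : lam ⟨0, by omega⟩ ≤ lam ⟨3 * n - 2, by omega⟩ + lam ⟨3 * n - 1, by omega⟩) :
    (Matrix.of ![
      ![2 * lam ⟨3*n-1, by omega⟩, lam ⟨3*n-2, by omega⟩ - lam ⟨0, by omega⟩,
        lam ⟨3*n-3, by omega⟩ - lam ⟨1, by omega⟩],
      ![lam ⟨3*n-2, by omega⟩ - lam ⟨0, by omega⟩, 2 * lam ⟨3*n-4, by omega⟩,
        lam ⟨3*n-5, by omega⟩ - lam ⟨2, by omega⟩],
      ![lam ⟨3*n-3, by omega⟩ - lam ⟨1, by omega⟩, lam ⟨3*n-5, by omega⟩ - lam ⟨2, by omega⟩,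
        2 * lam ⟨3*n-6, by omega⟩]] : Matrix (Fin 3) (Fin 3) ℝ).PosSemidef := by
  have hle : ∀ a b : ℕ, (ha : a < 3 * n) → (hb : b < 3 * n) → a ≤ b →
      lam ⟨b, hb⟩ ≤ lam ⟨a, ha⟩ := fun a b ha hb hab =>
    hsort ⟨a, ha⟩ ⟨b, hb⟩ (by exact Fin.mk_le_mk.mpr hab)
  -- abbreviations
  set l0 := lam ⟨0, by omega⟩ with hl0
  set l1 := lam ⟨1, by omega⟩ with hl1
  set l2 := lam ⟨2, by omega⟩ with hl2
  set m1 := lam ⟨3*n-1, by omega⟩ with hm1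
  set m2 := lam ⟨3*n-2, by omega⟩ with hm2
  set m3 := lam ⟨3*n-3, by omega⟩ with hm3
  set m4 := lam ⟨3*n-4, by omega⟩ with hm4
  set m5 := lam ⟨3*n-5, by omega⟩ with hm5
  set m6 := lam ⟨3*n-6, by omega⟩ with hm6
  have h10 : l1 ≤ l0 := hle 0 1 (by omega) (by omega) (by omega)
  have h21 : l2 ≤ l1 := hle 1 2 (by omega) (by omega) (by omega)
  have h12 : m1 ≤ m2 := hle (3*n-2) (3*n-1) (by omega) (by omega) (by omega)
  have h23 : m2 ≤ m3 := hle (3*n-3) (3*n-2) (by omega) (by omega) (by omega)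
  have h34 : m3 ≤ m4 := hle (3*n-4) (3*n-3) (by omega) (by omega) (by omega)
  have h45 : m4 ≤ m5 := hle (3*n-5) (3*n-4) (by omega) (by omega) (by omega)
  have h56 : m5 ≤ m6 := hle (3*n-6) (3*n-5) (by omega) (by omega) (by omega)
  have h20 : m2 ≤ l0 := hle 0 (3*n-2) (by omega) (by omega) (by omega)
  have h31 : m3 ≤ l1 := hle 1 (3*n-3) (by omega) (by omega) (by omega)
  have h52 : m5 ≤ l2 := hle 2 (3*n-5) (by omega) (by omega) (by omega)
  rw [Matrix.posSemidef_iff_dotProduct_mulVec]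
  constructor
  · show _ = _
    ext i j
    fin_cases i <;> fin_cases j <;>
      simp [Matrix.conjTranspose_apply]
  · intro x
    have e0 := x 0
    simp only [dotProduct, Matrix.mulVec, dotProduct, Fin.sum_univ_three,
      Matrix.of_apply, Pi.star_apply, star_trivial, RCLike.ofReal_real_eq_id, id]
    set a := x 0
    set b := x 1
    set c := x 2
    show (0:ℝ) ≤ _
    simp only [Matrix.cons_val', Matrix.cons_val_zero, Matrix.cons_val_one, Matrix.head_cons,
      Matrix.empty_val', Matrix.cons_val_fin_one, Matrix.head_fin_const,
      Matrix.cons_val_two, Matrix.tail_cons]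
    nlinarith [mul_nonneg (by linarith : (0:ℝ) ≤ l0 - m2) (sq_nonneg (a-b)),
      mul_nonneg (by linarith : (0:ℝ) ≤ l1 - m3) (sq_nonneg (a-c)),
      mul_nonneg (by linarith : (0:ℝ) ≤ l2 - m5) (sq_nonneg (b-c)),
      mul_nonneg (by linarith : (0:ℝ) ≤ 2*m1 - (l0-m2) - (l1-m3)) (sq_nonneg a),
      mul_nonneg (by linarith : (0:ℝ) ≤ 2*m4 - (l0-m2) - (l2-m5)) (sq_nonneg b),
      mul_nonneg (by linarith : (0:ℝ) ≤ 2*m6 - (l1-m3) - (l2-m5)) (sq_nonneg c)]
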